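/- Let $h_n = \beta_n e^{i\alpha_n}$ with $\beta_n > 0$ for $n = 0, \ldots, N$ and let $\theta_n^{CPP} \in \Phi_K$ be chosen so that $d(\theta_n^{CPP} + \alpha_n, \alpha_0) \leq \pi/K$ for each $n$ (closest point projection toward $h_0$). Then $|h_0 + \sum_{n=1}^N h_n e^{i\theta_n^{CPP}}| \geq \beta_0 + \cos(\pi/K) \sum_{n=1}^N \beta_n$, and hence $|h_0 + \sum_n h_n e^{i\theta_n^{CPP}}|^2 \geq \cos^2(\pi/K) \cdot (\sum_{n=0}^N \beta_n)^2 \geq \cos^2(\pi/K) \cdot \max_{\theta \in \Phi_K^N} |h_0 + \sum_n h_n e^{i\theta_n}|^2$. -/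

import Mathlib

open Real Complex

/-- Circular distance on ℝ / 2πℤ. -/
noncomputable def cdist (x y : ℝ) : ℝ := sInf (Set.range fun m : ℤ => |x - y + 2 * π * m|)

/-- The discrete phase-shift set Φ_K = {ω, 2ω, …, Kω}, ω = 2π/K. -/
def Phi (K : ℕ) : Set ℝ := {θ | ∃ k : ℕ, 1 ≤ k ∧ k ≤ K ∧ θ = k * (2 * π / K)}

lemma cos_cdist_le (x y c : ℝ) (hcπ : c ≤ π) (h : cdist x y ≤ c) :
    Real.cos c ≤ Real.cos (x - y) := by
  unfold cdist at h
  set a := x - y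
  have hπ : (0:ℝ) < π := Real.pi_pos
  have h2π : (0:ℝ) < 2 * π := by linarith
  set m0 : ℤ := round (a / (2 * π)) with hm0
  have hr : |a - 2 * π * m0| ≤ π := by
    have h1 := abs_sub_round (a / (2 * π))
    have heq : |a - 2 * π * m0| = 2 * π * |a / (2*π) - m0| := by
      rw [← abs_of_pos h2π, ← abs_mul, abs_of_pos h2π]
      congr 1; field_simp
    rw [heq]; nlinarith
  have hmin : sInf (Set.range fun m : ℤ => |a + 2 * π * m|) = |a - 2 * π * m0| := by
    apply le_antisymm
    · apply csInf_le ⟨0, by rintro t ⟨m, rfl⟩; positivity⟩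
      exact ⟨-m0, by push_cast; ring_nf⟩
    · apply le_csInf (Set.range_nonempty _)
      rintro t ⟨m, rfl⟩
      by_cases hm : m = -m0
      · subst hm; push_cast; apply le_of_eq; ring_nf
      · have h1 : (1:ℝ) ≤ |((m + m0 : ℤ) : ℝ)| := by
          exact_mod_cast Int.one_le_abs (by omega)
        have key : 2 * π * ((m:ℝ) + m0) = (a + 2*π*m) - (a - 2*π*m0) := by push_cast; ring
        have h2 : 2 * π ≤ |(a + 2*π*m) - (a - 2*π*m0)| := by
          rw [← key, abs_mul, abs_of_pos h2π]
          push_cast at h1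
          nlinarith
        have h3 : |(a + 2*π*m) - (a - 2*π*m0)| ≤ |a + 2*π*m| + |a - 2*π*m0| := abs_sub _ _
        linarith
  rw [hmin] at h
  have hca : Real.cos a = Real.cos (a - m0 * (2*π)) := (Real.cos_sub_int_mul_two_pi a m0).symm
  rw [hca]
  have heq : Real.cos (a - m0 * (2*π)) = Real.cos |a - 2*π*m0| := by
    rw [Real.cos_abs]; ring_nf
  rw [heq]
  exact Real.cos_le_cos_of_nonneg_of_le_pi (abs_nonneg _) hcπ h

theorem stmt_12 (K N : ℕ) (hK : 2 ≤ K) (β α : Fin (N + 1) → ℝ) (hβ : ∀ n, 0 < β n)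
    (h : Fin (N + 1) → ℂ)
    (hh : ∀ n, h n = (β n : ℂ) * Complex.exp ((α n : ℂ) * Complex.I))
    (θc : Fin N → ℝ) (hθc : ∀ n, θc n ∈ Phi K)
    (hcpp : ∀ n : Fin N, cdist (θc n + α n.succ) (α 0) ≤ π / K) :
    β 0 + Real.cos (π / K) * ∑ n : Fin N, β n.succ
        ≤ ‖h 0 + ∑ n : Fin N, h n.succ * Complex.exp (θc n * Complex.I)‖ ∧
    Real.cos (π / K) ^ 2 * (∑ n, β n) ^ 2
        ≤ ‖h 0 + ∑ n : Fin N, h n.succ * Complex.exp (θc n * Complex.I)‖ ^ 2 ∧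
    ∀ θ : Fin N → ℝ, (∀ n, θ n ∈ Phi K) →
      Real.cos (π / K) ^ 2 *
          ‖h 0 + ∑ n : Fin N, h n.succ * Complex.exp (θ n * Complex.I)‖ ^ 2
        ≤ ‖h 0 + ∑ n : Fin N, h n.succ * Complex.exp (θc n * Complex.I)‖ ^ 2 := by
  have hπ : (0:ℝ) < π := Real.pi_pos
  have hK0 : (0:ℝ) < K := by positivity
  have hK2 : (2:ℝ) ≤ K := by exact_mod_cast hK
  have hπK0 : 0 ≤ π / K := by positivity
  have hπK : π / K ≤ π / 2 := by
    rw [div_le_div_iff₀ hK0 two_pos]; nlinarith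
  have hπKπ : π / K ≤ π := by linarith
  have hcos0 : 0 ≤ Real.cos (π / K) := Real.cos_nonneg_of_mem_Icc ⟨by linarith, hπK⟩
  have hcos1 : Real.cos (π / K) ≤ 1 := Real.cos_le_one _
  set S := h 0 + ∑ n : Fin N, h n.succ * Complex.exp (θc n * Complex.I) with hS
  have hz : Complex.exp (-(α 0 : ℂ) * Complex.I) * S
      = (β 0 : ℂ) + ∑ n : Fin N,
          (β n.succ : ℂ) * Complex.exp (((θc n + α n.succ - α 0 : ℝ) : ℂ) * Complex.I) := by
    rw [hS, mul_add, Finset.mul_sum]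
    congr 1
    · rw [hh 0, ← mul_assoc, mul_comm (Complex.exp _), mul_assoc, ← Complex.exp_add]
      norm_num
    · apply Finset.sum_congr rfl
      intro n _
      rw [hh n.succ]
      rw [show Complex.exp (-(α 0:ℂ) * Complex.I) * ((β n.succ : ℂ) * Complex.exp ((α n.succ:ℂ) * Complex.I) * Complex.exp ((θc n:ℂ) * Complex.I))
        = (β n.succ : ℂ) * (Complex.exp (-(α 0:ℂ) * Complex.I) * Complex.exp ((α n.succ:ℂ) * Complex.I) * Complex.exp ((θc n:ℂ) * Complex.I)) by ring]
      congr 1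
      rw [← Complex.exp_add, ← Complex.exp_add]
      congr 1
      push_cast
      ring
  have hre : (Complex.exp (-(α 0 : ℂ) * Complex.I) * S).re
      = β 0 + ∑ n : Fin N, β n.succ * Real.cos (θc n + α n.succ - α 0) := by
    rw [hz]
    rw [Complex.add_re, Complex.re_sum, Complex.ofReal_re]
    congr 1
    apply Finset.sum_congr rfl
    intro n _
    rw [Complex.re_ofReal_mul, Complex.exp_ofReal_mul_I_re]
  have habs : ‖Complex.exp (-(α 0 : ℂ) * Complex.I) * S‖ = ‖S‖ := by
    rw [norm_mul, show -(α 0 : ℂ) * Complex.I = ((-α 0 : ℝ):ℂ) * Complex.I by push_cast; ring,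
      Complex.norm_exp_ofReal_mul_I, one_mul]
  have part1 : β 0 + Real.cos (π / K) * ∑ n : Fin N, β n.succ ≤ ‖S‖ := by
    have hle : β 0 + Real.cos (π / K) * ∑ n : Fin N, β n.succ
        ≤ (Complex.exp (-(α 0 : ℂ) * Complex.I) * S).re := by
      rw [hre, Finset.mul_sum]
      apply add_le_add_right
      apply Finset.sum_le_sum
      intro n _
      have hc := cos_cdist_le _ _ _ hπKπ (hcpp n)
      nlinarith [(hβ n.succ).le]
    calc β 0 + Real.cos (π / K) * ∑ n : Fin N, β n.succ
        ≤ (Complex.exp (-(α 0 : ℂ) * Complex.I) * S).re := hle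
      _ ≤ ‖Complex.exp (-(α 0 : ℂ) * Complex.I) * S‖ := Complex.re_le_norm _
      _ = ‖S‖ := habs
  have hsum : ∑ n, β n = β 0 + ∑ n : Fin N, β n.succ := Fin.sum_univ_succ β
  have hsumpos : 0 ≤ ∑ n : Fin N, β n.succ :=
    Finset.sum_nonneg fun n _ => (hβ n.succ).le
  have part2 : Real.cos (π / K) ^ 2 * (∑ n, β n) ^ 2 ≤ ‖S‖ ^ 2 := by
    have h1 : Real.cos (π / K) * (∑ n, β n) ≤ β 0 + Real.cos (π / K) * ∑ n : Fin N, β n.succ := by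
      rw [hsum]; nlinarith [(hβ 0).le]
    have h2 : 0 ≤ Real.cos (π / K) * (∑ n, β n) := by
      rw [hsum]; have := hβ 0; nlinarith
    calc Real.cos (π / K) ^ 2 * (∑ n, β n) ^ 2 = (Real.cos (π / K) * (∑ n, β n)) ^ 2 := by ring
      _ ≤ ‖S‖ ^ 2 := pow_le_pow_left₀ h2 (h1.trans part1) 2
  refine ⟨part1, part2, ?_⟩
  intro θ hθ
  have htri : ‖h 0 + ∑ n : Fin N, h n.succ * Complex.exp (θ n * Complex.I)‖ ≤ ∑ n, β n := by
    calc ‖h 0 + ∑ n : Fin N, h n.succ * Complex.exp (θ n * Complex.I)‖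
        ≤ ‖h 0‖ + ∑ n : Fin N, ‖h n.succ * Complex.exp (θ n * Complex.I)‖ := by
          refine (norm_add_le _ _).trans ?_
          gcongr
          exact norm_sum_le _ _
      _ = ∑ n, β n := by
          rw [hsum]
          congr 1
          · rw [hh 0, norm_mul, Complex.norm_exp_ofReal_mul_I, mul_one, Complex.norm_real, Real.norm_eq_abs,
              abs_of_pos (hβ 0)]
          · apply Finset.sum_congr rfl
            intro n _
            rw [norm_mul, hh n.succ, norm_mul, Complex.norm_exp_ofReal_mul_I,
              Complex.norm_exp_ofReal_mul_I, mul_one, mul_one, Complex.norm_real, Real.norm_eq_abs,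
              abs_of_pos (hβ n.succ)]
  calc Real.cos (π / K) ^ 2 * ‖h 0 + ∑ n : Fin N, h n.succ * Complex.exp (θ n * Complex.I)‖ ^ 2
      ≤ Real.cos (π / K) ^ 2 * (∑ n, β n) ^ 2 := by
        have := norm_nonneg (h 0 + ∑ n : Fin N, h n.succ * Complex.exp (θ n * Complex.I))
        gcongr
    _ ≤ ‖S‖ ^ 2 := part2
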